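/- Let M be a von Neumann algebra on a complex Hilbert space H and let γ₁, γ₂ ∈ H satisfy ⟪γ₁, x γ₁⟫ = ⟪γ₂, x γ₂⟫ for every x ∈ M (equality of the vector functionals E(γ₁) = E(γ₂) on M). Let P₁ and P₂ be the orthogonal projections of H onto the closures of the subspaces {x γ₁ : x ∈ M} and {x γ₂ : x ∈ M}, respectively. Then there exists a unique bounded operator u ∈ M' (the commutant of M) such that u γ₁ = γ₂ and u* ∘ u = P₁; moreover, this u is a partial isometry with u ∘ u* = P₂. -/

import Mathlib

open ContinuousLinearMap Submodule

noncomputable section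

namespace Stmt5Aux

variable {H : Type*} [NormedAddCommGroup H] [InnerProductSpace ℂ H] [CompleteSpace H]

local notation "⟪" x ", " y "⟫" => @inner ℂ _ _ x y

/-- The orbit Mγ as a submodule. -/
def orbit (M : VonNeumannAlgebra H) (γ : H) : Submodule ℂ H where
  carrier := {v : H | ∃ x : H →L[ℂ] H, x ∈ M ∧ v = x γ}
  add_mem' := by
    rintro a b ⟨x, hx, rfl⟩ ⟨y, hy, rfl⟩
    exact ⟨x + y, add_mem hx hy, (ContinuousLinearMap.add_apply x y γ).symm⟩
  zero_mem' := ⟨0, zero_mem _, rfl⟩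
  smul_mem' := by
    rintro c a ⟨x, hx, rfl⟩
    refine ⟨c • x, ?_, rfl⟩
    rw [Algebra.smul_def]
    exact mul_mem (M.toStarSubalgebra.algebraMap_mem c) hx

theorem span_set_eq (M : VonNeumannAlgebra H) (γ : H) :
    Submodule.span ℂ {v : H | ∃ x : H →L[ℂ] H, x ∈ M ∧ v = x γ} = orbit M γ :=
  Submodule.span_eq (orbit M γ)

theorem apply_mem_orbit {M : VonNeumannAlgebra H} {x : H →L[ℂ] H} (hx : x ∈ M) (γ : H) :
    x γ ∈ orbit M γ := ⟨x, hx, rfl⟩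

theorem closure_induction (W : Submodule ℂ H) {p : H → Prop} (hc : IsClosed {ξ | p ξ})
    (h : ∀ v ∈ W, p v) {a : H} (ha : a ∈ W.topologicalClosure) : p a := by
  have h1 : (W : Set H) ⊆ {ξ | p ξ} := h
  have h2 := closure_minimal h1 hc
  exact h2 (by rwa [← Submodule.topologicalClosure_coe] )

theorem eq_zero_of_mem_inf {K : Submodule ℂ H} {v : H} (h1 : v ∈ K) (h2 : v ∈ Kᗮ) : v = 0 :=
  inner_self_eq_zero.mp ((Submodule.mem_orthogonal K v).1 h2 v h1)

variable {M : VonNeumannAlgebra H} {γ₁ γ₂ : H}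

theorem norm_apply_eq (hE : ∀ x : H →L[ℂ] H, x ∈ M → ⟪γ₁, x γ₁⟫ = ⟪γ₂, x γ₂⟫)
    {x : H →L[ℂ] H} (hx : x ∈ M) : ‖x γ₁‖ = ‖x γ₂‖ := by
  have hx' : star x * x ∈ M := mul_mem (star_mem hx) hx
  have h := hE _ hx'
  have h₁ : ∀ γ : H, ⟪γ, (star x * x) γ⟫ = ⟪x γ, x γ⟫ := by
    intro γ
    rw [ContinuousLinearMap.mul_apply, ContinuousLinearMap.star_eq_adjoint,
      ContinuousLinearMap.adjoint_inner_right]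
  rw [h₁, h₁] at h
  rw [norm_eq_sqrt_re_inner (𝕜 := ℂ), norm_eq_sqrt_re_inner (𝕜 := ℂ), h]

theorem apply_eq (hE : ∀ x : H →L[ℂ] H, x ∈ M → ⟪γ₁, x γ₁⟫ = ⟪γ₂, x γ₂⟫)
    (x y : H →L[ℂ] H) (hx : x ∈ M) (hy : y ∈ M) (h : x γ₁ = y γ₁) : x γ₂ = y γ₂ := by
  have h0 : ‖(x - y) γ₁‖ = 0 := by
    rw [ContinuousLinearMap.sub_apply, sub_eq_zero.2 h, norm_zero]
  have h1 : ‖(x - y) γ₂‖ = 0 := by rw [← norm_apply_eq hE (sub_mem hx hy)]; exact h0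
  have h2 := norm_eq_zero.mp h1
  rw [ContinuousLinearMap.sub_apply] at h2
  exact sub_eq_zero.mp h2

theorem orbit_spec (w : orbit M γ₁) : ∃ x : H →L[ℂ] H, x ∈ M ∧ (w : H) = x γ₁ := w.2

/-- A representing operator for an element of the orbit. -/
def xw (w : orbit M γ₁) : H →L[ℂ] H := (orbit_spec w).choose

theorem xw_mem (w : orbit M γ₁) : xw w ∈ M := (orbit_spec w).choose_spec.1

theorem xw_eq (w : orbit M γ₁) : (w : H) = xw w γ₁ := (orbit_spec w).choose_spec.2

variable (hE : ∀ x : H →L[ℂ] H, x ∈ M → ⟪γ₁, x γ₁⟫ = ⟪γ₂, x γ₂⟫) (γ₂)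

/-- The densely defined intertwiner x γ₁ ↦ x γ₂ as an isometric linear map. -/
def fIso : orbit M γ₁ →ₗᵢ[ℂ] H where
  toLinearMap :=
    { toFun := fun w => xw w γ₂
      map_add' := by
        intro a b
        have : xw (a + b) γ₂ = (xw a + xw b) γ₂ := by
          refine apply_eq hE _ _ (xw_mem _) (add_mem (xw_mem a) (xw_mem b)) ?_
          rw [← xw_eq, ContinuousLinearMap.add_apply, ← xw_eq, ← xw_eq]
          rfl
        show xw (a + b) γ₂ = xw a γ₂ + xw b γ₂
        rw [this, ContinuousLinearMap.add_apply]
      map_smul' := by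
        intro c a
        have hmem : c • xw a ∈ M := by
          rw [Algebra.smul_def]
          exact mul_mem (M.toStarSubalgebra.algebraMap_mem c) (xw_mem a)
        have : xw (c • a) γ₂ = (c • xw a) γ₂ := by
          refine apply_eq hE _ _ (xw_mem _) hmem ?_
          rw [← xw_eq, ContinuousLinearMap.smul_apply, ← xw_eq]
          rfl
        show xw (c • a) γ₂ = (RingHom.id ℂ) c • xw a γ₂
        rw [this, ContinuousLinearMap.smul_apply]
        rfl }
  norm_map' := by
    intro w
    show ‖xw w γ₂‖ = ‖w‖
    rw [← norm_apply_eq hE (xw_mem w), ← xw_eq]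
    rfl

/-- The isometric inclusion of a submodule into its closure. -/
def incl (W : Submodule ℂ H) : W →ₗᵢ[ℂ] W.topologicalClosure :=
  ⟨Submodule.inclusion W.le_topologicalClosure, fun _ => rfl⟩

/-- The inclusion as a continuous linear map. -/
def inclL (W : Submodule ℂ H) : W →L[ℂ] W.topologicalClosure :=
  (incl W).toContinuousLinearMap

theorem isometry_inclL (W : Submodule ℂ H) : Isometry (inclL W) := (incl W).isometry

theorem denseRange_inclL (W : Submodule ℂ H) : DenseRange (inclL W) := by
  intro k
  have himg : (Subtype.val '' Set.range (inclL W)) = (W : Set H) := by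
    ext v
    constructor
    · rintro ⟨k, ⟨w, rfl⟩, rfl⟩; exact w.2
    · intro hv; exact ⟨inclL W ⟨v, hv⟩, ⟨⟨v, hv⟩, rfl⟩, rfl⟩
  rw [closure_subtype, himg]
  have := k.2
  rwa [← Submodule.topologicalClosure_coe]

/-- The extension of `fIso` to the closure of the orbit. -/
def V : (orbit M γ₁).topologicalClosure →L[ℂ] H :=
  ((fIso γ₂ hE).toContinuousLinearMap).extend (inclL (orbit M γ₁))

theorem V_incl (w : orbit M γ₁) : V γ₂ hE (inclL _ w) = fIso γ₂ hE w :=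
  ContinuousLinearMap.extend_eq _ (denseRange_inclL _) (isometry_inclL _).isUniformInducing w

theorem V_apply {x : H →L[ℂ] H} (hx : x ∈ M)
    (h : x γ₁ ∈ (orbit M γ₁).topologicalClosure) :
    V γ₂ hE ⟨x γ₁, h⟩ = x γ₂ := by
  have h1 : (⟨x γ₁, h⟩ : (orbit M γ₁).topologicalClosure)
      = inclL _ ⟨x γ₁, apply_mem_orbit hx γ₁⟩ := rfl
  rw [h1, V_incl]
  exact apply_eq hE _ _ (xw_mem _) hx (xw_eq _).symm

theorem V_norm (k : (orbit M γ₁).topologicalClosure) : ‖V γ₂ hE k‖ = ‖k‖ := by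
  refine (denseRange_inclL _).induction_on k
    (isClosed_eq (continuous_norm.comp (V γ₂ hE).continuous) continuous_norm) (fun w => ?_)
  rw [V_incl]
  exact (fIso γ₂ hE).norm_map w

theorem V_inner (k k' : (orbit M γ₁).topologicalClosure) :
    ⟪V γ₂ hE k, V γ₂ hE k'⟫ = ⟪(k : H), (k' : H)⟫ := by
  have := LinearIsometry.inner_map_map
    ⟨(V γ₂ hE : (orbit M γ₁).topologicalClosure →ₗ[ℂ] H), V_norm γ₂ hE⟩ k k'
  exact this

theorem V_mem_K2 (k : (orbit M γ₁).topologicalClosure) :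
    V γ₂ hE k ∈ (orbit M γ₂).topologicalClosure := by
  refine (denseRange_inclL _).induction_on k
    ((orbit M γ₂).isClosed_topologicalClosure.preimage (V γ₂ hE).continuous) (fun w => ?_)
  show V γ₂ hE (inclL _ w) ∈ _
  rw [V_incl]
  exact (orbit M γ₂).le_topologicalClosure (apply_mem_orbit (xw_mem w) γ₂)

end Stmt5Aux

/-- If two vectors define the same vector functional on a von Neumann algebra M,
then there is a unique partial isometry u in the commutant M' with u γ₁ = γ₂ and
u* u = [Mγ₁]; moreover u u* = [Mγ₂] (Proposition 4.6). -/
theorem stmt5 {H : Type*} [NormedAddCommGroup H] [InnerProductSpace ℂ H]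
    [CompleteSpace H]
    (M : VonNeumannAlgebra H) (γ₁ γ₂ : H)
    (hE : ∀ x : H →L[ℂ] H, x ∈ M → (inner ℂ γ₁ (x γ₁) : ℂ) = inner ℂ γ₂ (x γ₂))
    (K₁ K₂ : Submodule ℂ H)
    (hK₁ : K₁ = (Submodule.span ℂ
      {v : H | ∃ x : H →L[ℂ] H, x ∈ M ∧ v = x γ₁}).topologicalClosure)
    (hK₂ : K₂ = (Submodule.span ℂ
      {v : H | ∃ x : H →L[ℂ] H, x ∈ M ∧ v = x γ₂}).topologicalClosure)
    (P₁ P₂ : H →L[ℂ] H)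
    (hP₁ : ∀ ξ : H, P₁ ξ ∈ K₁ ∧ ξ - P₁ ξ ∈ K₁ᗮ)
    (hP₂ : ∀ ξ : H, P₂ ξ ∈ K₂ ∧ ξ - P₂ ξ ∈ K₂ᗮ) :
    (∃! u : H →L[ℂ] H, u ∈ M.commutant ∧ u γ₁ = γ₂ ∧
        ContinuousLinearMap.adjoint u ∘L u = P₁) ∧
    (∀ u : H →L[ℂ] H, u ∈ M.commutant → u γ₁ = γ₂ →
        ContinuousLinearMap.adjoint u ∘L u = P₁ →
        u ∘L ContinuousLinearMap.adjoint u = P₂) := by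
  open Stmt5Aux in
  rw [Stmt5Aux.span_set_eq] at hK₁ hK₂
  subst hK₁ hK₂
  set W₁ := Stmt5Aux.orbit M γ₁ with hW₁
  set W₂ := Stmt5Aux.orbit M γ₂ with hW₂
  -- basic facts about P₁
  have hP₁K : ∀ a ∈ W₁.topologicalClosure, P₁ a = a := by
    intro a ha
    have h1 : a - P₁ a ∈ W₁.topologicalClosure := sub_mem ha (hP₁ a).1
    have := Stmt5Aux.eq_zero_of_mem_inf h1 (hP₁ a).2
    have := sub_eq_zero.mp this
    exact this.symm
  have hP₁0 : ∀ ζ ∈ (W₁.topologicalClosure)ᗮ, P₁ ζ = 0 := by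
    intro ζ hζ
    have h1 : P₁ ζ ∈ (W₁.topologicalClosure)ᗮ := by
      have : P₁ ζ = ζ - (ζ - P₁ ζ) := by abel
      rw [this]
      exact sub_mem hζ (hP₁ ζ).2
    exact Stmt5Aux.eq_zero_of_mem_inf (hP₁ ζ).1 h1
  have hinner : ∀ η ξ : H, (inner ℂ (P₁ η) (P₁ ξ) : ℂ) = inner ℂ η (P₁ ξ) := by
    intro η ξ
    have h0 : (inner ℂ (η - P₁ η) (P₁ ξ) : ℂ) = 0 :=
      (Submodule.mem_orthogonal' _ _).1 (hP₁ η).2 _ ((hP₁ ξ).1)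
    rw [inner_sub_left] at h0
    exact (sub_eq_zero.mp h0).symm
  -- the partial isometry
  let pc : H →L[ℂ] W₁.topologicalClosure :=
    P₁.codRestrict _ (fun ξ => (hP₁ ξ).1)
  let u : H →L[ℂ] H := (Stmt5Aux.V γ₂ hE) ∘L pc
  have hu_def : ∀ ξ : H, u ξ = Stmt5Aux.V γ₂ hE (pc ξ) := fun _ => rfl
  have hpc : ∀ ξ : H, (pc ξ : H) = P₁ ξ := fun _ => rfl
  have hu_orbit : ∀ x : H →L[ℂ] H, x ∈ M → u (x γ₁) = x γ₂ := by
    intro x hx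
    have hmem : x γ₁ ∈ W₁.topologicalClosure :=
      W₁.le_topologicalClosure (Stmt5Aux.apply_mem_orbit hx γ₁)
    have h1 : pc (x γ₁) = ⟨x γ₁, hmem⟩ := Subtype.ext (hP₁K _ hmem)
    rw [hu_def, h1]
    exact Stmt5Aux.V_apply γ₂ hE hx hmem
  have hu0 : ∀ ζ ∈ (W₁.topologicalClosure)ᗮ, u ζ = 0 := by
    intro ζ hζ
    have h1 : pc ζ = 0 := Subtype.ext (hP₁0 ζ hζ)
    rw [hu_def, h1, map_zero]
  have huγ : u γ₁ = γ₂ := by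
    have := hu_orbit 1 (one_mem M)
    simpa using this
  -- agreement on the closure of the orbit
  have hclosure : ∀ A B : H →L[ℂ] H, (∀ x : H →L[ℂ] H, x ∈ M → A (x γ₁) = B (x γ₁)) →
      ∀ a ∈ W₁.topologicalClosure, A a = B a := by
    intro A B h a ha
    refine Stmt5Aux.closure_induction W₁ (isClosed_eq A.continuous B.continuous) ?_ ha
    rintro v ⟨x, hx, rfl⟩
    exact h x hx
  -- M-invariance
  have hMK₁ : ∀ y : H →L[ℂ] H, y ∈ M → ∀ a ∈ W₁.topologicalClosure,
      y a ∈ W₁.topologicalClosure := by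
    intro y hy a ha
    refine Stmt5Aux.closure_induction W₁
      (W₁.isClosed_topologicalClosure.preimage y.continuous) ?_ ha
    rintro v ⟨x, hx, rfl⟩
    exact W₁.le_topologicalClosure ⟨y * x, mul_mem hy hx, rfl⟩
  have hMK₁o : ∀ y : H →L[ℂ] H, y ∈ M → ∀ ζ ∈ (W₁.topologicalClosure)ᗮ,
      y ζ ∈ (W₁.topologicalClosure)ᗮ := by
    intro y hy ζ hζ
    rw [Submodule.mem_orthogonal]
    intro w hw
    rw [← ContinuousLinearMap.adjoint_inner_left]
    refine (Submodule.mem_orthogonal _ _).1 hζ _ ?_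
    refine hMK₁ (ContinuousLinearMap.adjoint y) ?_ w hw
    rw [← ContinuousLinearMap.star_eq_adjoint]
    exact star_mem hy
  -- u is in the commutant
  have humem : u ∈ M.commutant := by
    rw [VonNeumannAlgebra.mem_commutant_iff]
    intro y hy
    ext ξ
    show y (u ξ) = u (y ξ)
    have hA : ∀ a ∈ W₁.topologicalClosure, (y ∘L u) a = (u ∘L y) a := by
      refine hclosure _ _ ?_
      intro x hx
      show y (u (x γ₁)) = u (y (x γ₁))
      have h1 : y (x γ₁) = (y * x) γ₁ := rfl
      rw [hu_orbit x hx, h1, hu_orbit _ (mul_mem hy hx)]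
      rfl
    have hB : y (u (ξ - P₁ ξ)) = u (y (ξ - P₁ ξ)) := by
      rw [hu0 _ (hP₁ ξ).2, map_zero, hu0 _ (hMK₁o y hy _ (hP₁ ξ).2)]
    have hA' : y (u (P₁ ξ)) = u (y (P₁ ξ)) := hA _ (hP₁ ξ).1
    have hdec : P₁ ξ + (ξ - P₁ ξ) = ξ := by abel
    calc y (u ξ) = y (u (P₁ ξ)) + y (u (ξ - P₁ ξ)) := by
          rw [← map_add, ← map_add, hdec]
      _ = u (y (P₁ ξ)) + u (y (ξ - P₁ ξ)) := by rw [hA', hB]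
      _ = u (y ξ) := by rw [← map_add, ← map_add, hdec]
  -- u* u = P₁
  have huadj : ContinuousLinearMap.adjoint u ∘L u = P₁ := by
    ext ξ
    refine ext_inner_left ℂ fun η => ?_
    rw [ContinuousLinearMap.comp_apply, ContinuousLinearMap.adjoint_inner_right]
    have h1 : (inner ℂ (u η) (u ξ) : ℂ) = inner ℂ ((pc η : H)) ((pc ξ : H)) :=
      Stmt5Aux.V_inner γ₂ hE _ _
    rw [h1, hpc, hpc]
    exact hinner η ξ
  -- uniqueness
  have huniq : ∀ u' : H →L[ℂ] H, u' ∈ M.commutant → u' γ₁ = γ₂ →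
      ContinuousLinearMap.adjoint u' ∘L u' = P₁ → u' = u := by
    intro u' hc hγ hadj
    have h1 : ∀ a ∈ W₁.topologicalClosure, u' a = u a := by
      refine hclosure _ _ ?_
      intro x hx
      have hcomm := (VonNeumannAlgebra.mem_commutant_iff.mp hc) x hx
      have hx' : x (u' γ₁) = u' (x γ₁) := by
        have := congrArg (fun T : H →L[ℂ] H => T γ₁) hcomm
        exact this
      rw [← hx', hγ, hu_orbit x hx]
    have h2 : ∀ ζ ∈ (W₁.topologicalClosure)ᗮ, u' ζ = 0 := by
      intro ζ hζ
      have h3 : (inner ℂ (u' ζ) (u' ζ) : ℂ) = 0 := by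
        have h4 : (inner ℂ ζ ((ContinuousLinearMap.adjoint u' ∘L u') ζ) : ℂ)
            = inner ℂ (u' ζ) (u' ζ) := by
          rw [ContinuousLinearMap.comp_apply, ContinuousLinearMap.adjoint_inner_right]
        rw [← h4, hadj]
        exact (Submodule.mem_orthogonal' _ _).1 hζ _ ((hP₁ ζ).1)
      exact inner_self_eq_zero.mp h3
    ext ξ
    have hdec : P₁ ξ + (ξ - P₁ ξ) = ξ := by abel
    calc u' ξ = u' (P₁ ξ) + u' (ξ - P₁ ξ) := by rw [← map_add, hdec]
      _ = u (P₁ ξ) + u (ξ - P₁ ξ) := by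
          rw [h1 _ (hP₁ ξ).1, h2 _ (hP₁ ξ).2, hu0 _ (hP₁ ξ).2]
      _ = u ξ := by rw [← map_add, hdec]
  refine ⟨⟨u, ⟨humem, huγ, huadj⟩, fun u' h => huniq u' h.1 h.2.1 h.2.2⟩, ?_⟩
  -- u u* = P₂
  intro u' hc hγ hadj
  rw [huniq u' hc hγ hadj]
  have hrange : ∀ ξ : H, u ξ ∈ W₂.topologicalClosure := fun ξ =>
    Stmt5Aux.V_mem_K2 γ₂ hE (pc ξ)
  have horth : ∀ ξ : H, ξ - u (ContinuousLinearMap.adjoint u ξ) ∈ (W₂.topologicalClosure)ᗮ := by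
    intro ξ
    rw [Submodule.mem_orthogonal]
    intro w hw
    refine Stmt5Aux.closure_induction W₂
      (isClosed_eq (Continuous.inner continuous_id continuous_const) continuous_const) ?_ hw
    rintro v ⟨x, hx, rfl⟩
    show (inner ℂ (x γ₂) (ξ - u (ContinuousLinearMap.adjoint u ξ)) : ℂ) = 0
    have hxg : x γ₂ = u (x γ₁) := (hu_orbit x hx).symm
    have eA : (inner ℂ (u (x γ₁)) (u (ContinuousLinearMap.adjoint u ξ)) : ℂ)
        = inner ℂ (x γ₁) (P₁ (ContinuousLinearMap.adjoint u ξ)) := by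
      have h1 : (inner ℂ (u (x γ₁)) (u (ContinuousLinearMap.adjoint u ξ)) : ℂ)
          = inner ℂ ((pc (x γ₁) : H)) ((pc (ContinuousLinearMap.adjoint u ξ) : H)) :=
        Stmt5Aux.V_inner γ₂ hE _ _
      rw [h1, hpc, hpc]
      have hmem : x γ₁ ∈ W₁.topologicalClosure :=
        W₁.le_topologicalClosure (Stmt5Aux.apply_mem_orbit hx γ₁)
      rw [hP₁K _ hmem]
    have eB : (inner ℂ (u (x γ₁)) ξ : ℂ) = inner ℂ (x γ₁) (ContinuousLinearMap.adjoint u ξ) :=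
      (ContinuousLinearMap.adjoint_inner_right u _ _).symm
    rw [hxg, inner_sub_right, eA, eB, ← inner_sub_right]
    refine (Submodule.mem_orthogonal _ _).1 (hP₁ _).2 _ ?_
    exact W₁.le_topologicalClosure (Stmt5Aux.apply_mem_orbit hx γ₁)
  ext ξ
  show u (ContinuousLinearMap.adjoint u ξ) = P₂ ξ
  have hd1 : u (ContinuousLinearMap.adjoint u ξ) - P₂ ξ ∈ W₂.topologicalClosure :=
    sub_mem (hrange _) (hP₂ ξ).1
  have hd2 : u (ContinuousLinearMap.adjoint u ξ) - P₂ ξ ∈ (W₂.topologicalClosure)ᗮ := by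
    have h1 : u (ContinuousLinearMap.adjoint u ξ) - P₂ ξ
        = (ξ - P₂ ξ) - (ξ - u (ContinuousLinearMap.adjoint u ξ)) := by abel
    rw [h1]
    exact sub_mem (hP₂ ξ).2 (horth ξ)
  have := Stmt5Aux.eq_zero_of_mem_inf hd1 hd2
  exact sub_eq_zero.mp this
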